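/- For all integers d ≥ 3 and k ≥ 1 and every real y with 0 ≤ y ≤ k, one has (k + 1 − y)·(d^{⌊y⌋} − 1)/(d − 1) ≤ (d^k − 1)/(d − 1), where ⌊y⌋ denotes the floor of y. -/

import Mathlib

/-- Consequence of Claim 1 used in Lemma 2: for integers `d ≥ 3`, `k ≥ 1` and real
`0 ≤ y ≤ k`, one has `(k + 1 − y)·(d^⌊y⌋ − 1)/(d − 1) ≤ (d^k − 1)/(d − 1)`. -/
theorem stmt_5 (d k : ℕ) (hd : 3 ≤ d) (hk : 1 ≤ k) (y : ℝ) (hy0 : 0 ≤ y) (hyk : y ≤ (k : ℝ)) :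
    ((k : ℝ) + 1 - y) * ((d : ℝ) ^ ⌊y⌋ - 1) / ((d : ℝ) - 1) ≤ ((d : ℝ) ^ k - 1) / ((d : ℝ) - 1) := by
  have hd1 : (1 : ℝ) < (d : ℝ) := by
    have : (3 : ℝ) ≤ (d : ℝ) := by exact_mod_cast hd
    linarith
  have hdpos : (0 : ℝ) < (d : ℝ) - 1 := by linarith
  apply div_le_div_of_nonneg_right ?_ hdpos.le |>.trans_eq rfl
  -- numerator inequality
  set m : ℕ := ⌊y⌋.toNat with hm
  have hfloor : ((m : ℤ) : ℝ) = (⌊y⌋ : ℝ) := by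
    exact_mod_cast congrArg (fun z : ℤ => (z : ℝ)) (Int.toNat_of_nonneg (Int.floor_nonneg.2 hy0))
  have hmy : (m : ℝ) ≤ y := by
    have := Int.floor_le y
    rw [← hfloor] at this
    exact_mod_cast this
  have hpow : (d : ℝ) ^ ⌊y⌋ = (d : ℝ) ^ m := by
    rw [← Int.toNat_of_nonneg (Int.floor_nonneg.2 hy0), zpow_natCast]
  rw [hpow]
  have hmk : m ≤ k := by
    have : (m : ℝ) ≤ (k : ℝ) := le_trans hmy hyk
    exact_mod_cast this
  have hstep : ((k - m + 1 : ℕ) : ℝ) ≤ (d : ℝ) ^ (k - m) := by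
    have := Nat.lt_pow_self (n := k - m) (show 1 < d by omega)
    exact_mod_cast this
  have hdm1 : (1 : ℝ) ≤ (d : ℝ) ^ m := one_le_pow₀ hd1.le
  have hdkm1 : (1 : ℝ) ≤ (d : ℝ) ^ (k - m) := one_le_pow₀ hd1.le
  have hcast : ((k - m + 1 : ℕ) : ℝ) = (k : ℝ) - m + 1 := by
    push_cast [Nat.cast_sub hmk]; ring
  have h1 : ((k : ℝ) + 1 - y) * ((d : ℝ) ^ m - 1) ≤ ((k : ℝ) - m + 1) * ((d : ℝ) ^ m - 1) := by
    apply mul_le_mul_of_nonneg_right (by linarith) (by linarith)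
  have h2 : ((k : ℝ) - m + 1) * ((d : ℝ) ^ m - 1) ≤ (d : ℝ) ^ (k - m) * ((d : ℝ) ^ m - 1) := by
    apply mul_le_mul_of_nonneg_right (by rw [← hcast]; exact hstep) (by linarith)
  have h3 : (d : ℝ) ^ (k - m) * (d : ℝ) ^ m = (d : ℝ) ^ k := by
    rw [← pow_add, Nat.sub_add_cancel hmk]
  nlinarith [h1, h2, h3, hdkm1]
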